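/- Sion's minimax theorem: Let X and Y be nonempty convex compact subsets of two real topological vector spaces, and let f : X × Y → ℝ be continuous, quasi-concave in the first variable for each fixed y ∈ Y (i.e. for every y and c the set {x ∈ X : f(x,y) ≥ c} is convex) and quasi-convex in the second variable for each fixed x ∈ X (i.e. for every x and c the set {y ∈ Y : f(x,y) ≤ c} is convex). Then max_{x∈X} min_{y∈Y} f(x,y) = min_{y∈Y} max_{x∈X} f(x,y), where all the indicated maxima and minima are attained. -/

import Mathlib

open Set


lemma sion_compact_sep {α β : Type*} [TopologicalSpace α] [TopologicalSpace β]
    {X : Set α} (hX : IsCompact X) {g : α → β} (hg : ContinuousOn g X)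
    {C : Set β} (hC : IsClosed C) : IsCompact {x ∈ X | g x ∈ C} := by
  have hcs : CompactSpace X := isCompact_iff_compactSpace.mp hX
  have h1 : Continuous (X.restrict g) := continuousOn_iff_continuous_restrict.mp hg
  have h3 : IsCompact (X.restrict g ⁻¹' C) := (hC.preimage h1).isCompact
  have h4 := h3.image continuous_subtype_val
  convert h4 using 1
  ext x
  constructor
  · rintro ⟨hx, hgx⟩
    exact ⟨⟨x, hx⟩, hgx, rfl⟩
  · rintro ⟨⟨x', hx'⟩, hgx, rfl⟩
    exact ⟨hx', hgx⟩


lemma sion_two_point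
    {E F : Type*} [AddCommGroup E] [Module ℝ E] [TopologicalSpace E]
    [IsTopologicalAddGroup E] [ContinuousSMul ℝ E]
    [AddCommGroup F] [Module ℝ F] [TopologicalSpace F]
    [IsTopologicalAddGroup F] [ContinuousSMul ℝ F]
    (X : Set E) (Y : Set F) (f : E → F → ℝ)
    (hfx : ∀ x ∈ X, ContinuousOn (f x) Y)
    (hfy : ∀ y ∈ Y, ContinuousOn (fun x => f x y) X)
    (hqc : ∀ y ∈ Y, ∀ c : ℝ, Convex ℝ {x ∈ X | c ≤ f x y})
    (hqv : ∀ x ∈ X, ∀ c : ℝ, Convex ℝ {y ∈ Y | f x y ≤ c})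
    (hYconv : Convex ℝ Y)
    {y₁ y₂ : F} (hy₁ : y₁ ∈ Y) (hy₂ : y₂ ∈ Y)
    {a c : ℝ} (hac : a < c)
    (hz : ∀ z ∈ Y, ∃ x ∈ X, c ≤ f x z) :
    ∃ x ∈ X, a ≤ f x y₁ ∧ a ≤ f x y₂ := by
  by_contra hcon
  -- every x has one value < a
  have hd : ∀ x ∈ X, f x y₁ < a ∨ f x y₂ < a := by
    intro x hx
    rcases lt_or_ge (f x y₁) a with h | h
    · exact Or.inl h
    rcases lt_or_ge (f x y₂) a with h' | h'
    · exact Or.inr h'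
    · exact absurd ⟨x, hx, h, h'⟩ hcon
  set b : ℝ := (a + c) / 2 with hb
  have hab : a < b := by rw [hb]; linarith
  have hbc : b < c := by rw [hb]; linarith
  set z : ℝ → F := fun t => (1 - t) • y₁ + t • y₂ with hzdef
  have hzc : Continuous z := by
    apply Continuous.add
    · exact (continuous_const.sub continuous_id).smul continuous_const
    · exact continuous_id.smul continuous_const
  have hzY : ∀ t ∈ Icc (0:ℝ) 1, z t ∈ Y := by
    intro t ht
    exact hYconv hy₁ hy₂ (by linarith [ht.2]) ht.1 (by ring)
  have hz0 : z 0 = y₁ := by simp [hzdef]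
  have hz1 : z 1 = y₂ := by simp [hzdef]
  -- dichotomy for points in the upper level set
  have dich : ∀ t ∈ Icc (0:ℝ) 1, ∀ x ∈ X, b ≤ f x (z t) →
      (a < f x y₁ ∧ f x y₂ < a) ∨ (a < f x y₂ ∧ f x y₁ < a) := by
    intro t ht x hx hbf
    have hone : a < f x y₁ ∨ a < f x y₂ := by
      by_contra hno
      push_neg at hno
      have hmem : z t ∈ {y ∈ Y | f x y ≤ a} :=
        hqv x hx a ⟨hy₁, hno.1⟩ ⟨hy₂, hno.2⟩ (by linarith [ht.2]) ht.1 (by ring)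
      exact absurd hbf (by push_neg; linarith [hmem.2])
    rcases hd x hx with h | h
    · rcases hone with h' | h'
      · linarith
      · exact Or.inr ⟨h', h⟩
    · rcases hone with h' | h'
      · exact Or.inl ⟨h', h⟩
      · linarith
  -- uniformity: within one t, all points of the level set fall on the same side
  have unif : ∀ t ∈ Icc (0:ℝ) 1,
      (∀ x ∈ X, b ≤ f x (z t) → a < f x y₁) ∨ (∀ x ∈ X, b ≤ f x (z t) → a < f x y₂) := by
    intro t ht
    by_contra hno
    push_neg at hno
    obtain ⟨⟨x₁, hx₁, hbx₁, hax₁⟩, ⟨x₂, hx₂, hbx₂, hax₂⟩⟩ := hno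
    have h₁ : a < f x₁ y₂ ∧ f x₁ y₁ < a := by
      rcases dich t ht x₁ hx₁ hbx₁ with h | h
      · linarith [h.1]
      · exact h
    have h₂ : a < f x₂ y₁ ∧ f x₂ y₂ < a := by
      rcases dich t ht x₂ hx₂ hbx₂ with h | h
      · exact h
      · linarith [h.1]
    set w : ℝ → E := fun s => (1 - s) • x₁ + s • x₂ with hwdef
    have hwc : Continuous w := by
      apply Continuous.add
      · exact (continuous_const.sub continuous_id).smul continuous_const
      · exact continuous_id.smul continuous_const
    have hA : Convex ℝ {x ∈ X | b ≤ f x (z t)} := hqc (z t) (hzY t ht) b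
    have hwA : ∀ s ∈ Icc (0:ℝ) 1, w s ∈ {x ∈ X | b ≤ f x (z t)} := by
      intro s hs
      exact hA ⟨hx₁, hbx₁⟩ ⟨hx₂, hbx₂⟩ (by linarith [hs.2]) hs.1 (by ring)
    have hwX : ∀ s ∈ Icc (0:ℝ) 1, w s ∈ X := fun s hs => (hwA s hs).1
    set ψ : ℝ → ℝ := fun s => f (w s) y₁ - f (w s) y₂ with hψdef
    have hψc : ContinuousOn ψ (Icc (0:ℝ) 1) := by
      apply ContinuousOn.sub
      · exact (hfy y₁ hy₁).comp hwc.continuousOn hwX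
      · exact (hfy y₂ hy₂).comp hwc.continuousOn hwX
    have hw0 : w 0 = x₁ := by simp [hwdef]
    have hw1 : w 1 = x₂ := by simp [hwdef]
    have hψ0 : ψ 0 < 0 := by simp only [hψdef, hw0]; linarith [h₁.1, h₁.2]
    have hψ1 : 0 < ψ 1 := by simp only [hψdef, hw1]; linarith [h₂.1, h₂.2]
    obtain ⟨s, hs, hψs⟩ := intermediate_value_Icc (by norm_num : (0:ℝ) ≤ 1) hψc
      ⟨le_of_lt hψ0, le_of_lt hψ1⟩
    rcases dich t ht (w s) (hwX s hs) (hwA s hs).2 with h | h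
    · have : 0 < ψ s := by simp only [hψdef]; linarith [h.1, h.2]
      rw [hψs] at this; linarith
    · have : ψ s < 0 := by simp only [hψdef]; linarith [h.1, h.2]
      rw [hψs] at this; linarith
  -- The two label sets
  set T₁ : Set ℝ := {t ∈ Icc (0:ℝ) 1 | ∀ x ∈ X, b ≤ f x (z t) → a < f x y₁} with hT₁def
  set T₂ : Set ℝ := {t ∈ Icc (0:ℝ) 1 | ∀ x ∈ X, b ≤ f x (z t) → a < f x y₂} with hT₂def
  have hcover : Icc (0:ℝ) 1 ⊆ T₁ ∪ T₂ := by
    intro t ht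
    rcases unif t ht with h | h
    · exact Or.inl ⟨ht, h⟩
    · exact Or.inr ⟨ht, h⟩
  have h0T₁ : (0:ℝ) ∈ T₁ := by
    refine ⟨⟨le_refl 0, by norm_num⟩, ?_⟩
    intro x hx hbf
    rw [hz0] at hbf; linarith
  have h1T₂ : (1:ℝ) ∈ T₂ := by
    refine ⟨⟨by norm_num, le_refl 1⟩, ?_⟩
    intro x hx hbf
    rw [hz1] at hbf; linarith
  -- closedness of the label sets
  have hclosed : ∀ (T : Set ℝ) (y' y'' : F), y' ∈ Y → y'' ∈ Y →
      T = {t ∈ Icc (0:ℝ) 1 | ∀ x ∈ X, b ≤ f x (z t) → a < f x y'} →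
      (∀ x ∈ X, f x y' < a ∨ f x y'' < a) →
      (∀ t ∈ Icc (0:ℝ) 1, (∀ x ∈ X, b ≤ f x (z t) → a < f x y') ∨
        (∀ x ∈ X, b ≤ f x (z t) → a < f x y'')) →
      (∀ t ∈ Icc (0:ℝ) 1, ∀ x ∈ X, b ≤ f x (z t) → a < f x y' ∨ a < f x y'') →
      IsClosed T := by
    intro T y' y'' hy' hy'' hTdef hd' hunif' hone'
    have : IsSeqClosed T := by
      intro u t hu hut
      have htIcc : t ∈ Icc (0:ℝ) 1 := isClosed_Icc.mem_of_tendsto hut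
        (Filter.Eventually.of_forall (fun n => (hTdef ▸ hu n).1))
      obtain ⟨x', hx', hcx'⟩ := hz (z t) (hzY t htIcc)
      -- f x' (z (u n)) → f x' (z t) ≥ c > b
      have hcont : ContinuousOn (fun s => f x' (z s)) (Icc (0:ℝ) 1) :=
        (hfx x' hx').comp hzc.continuousOn hzY
      have hu' : Filter.Tendsto u Filter.atTop (nhdsWithin t (Icc (0:ℝ) 1)) :=
        tendsto_nhdsWithin_iff.mpr ⟨hut, Filter.Eventually.of_forall (fun n => (hTdef ▸ hu n).1)⟩
      have htend : Filter.Tendsto (fun n => f x' (z (u n))) Filter.atTop (nhds (f x' (z t))) :=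
        ((hcont t htIcc).tendsto).comp hu'
      have hev : ∀ᶠ n in Filter.atTop, b < f x' (z (u n)) :=
        htend.eventually (eventually_gt_nhds (lt_of_lt_of_le hbc hcx'))
      obtain ⟨n, hn⟩ := hev.exists
      have hx'y' : a < f x' y' := (hTdef ▸ hu n).2 x' hx' (le_of_lt hn)
      rw [hTdef]
      refine ⟨htIcc, ?_⟩
      intro x hx hbf
      by_contra hnlt
      push_neg at hnlt
      rcases hunif' t htIcc with h | h
      · exact absurd (h x hx hbf) (by linarith)
      · have h2 := h x' hx' (by linarith)
        rcases hd' x' hx' with h3 | h3 <;> linarith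
    exact this.isClosed
  have hT₁closed : IsClosed T₁ := hclosed T₁ y₁ y₂ hy₁ hy₂ hT₁def hd unif
    (fun t ht x hx hbf => by rcases dich t ht x hx hbf with h | h
                             exacts [Or.inl h.1, Or.inr h.1])
  have hT₂closed : IsClosed T₂ := by
    apply hclosed T₂ y₂ y₁ hy₂ hy₁ hT₂def
    · intro x hx; exact (hd x hx).symm
    · intro t ht; exact (unif t ht).symm
    · intro t ht x hx hbf
      rcases dich t ht x hx hbf with h | h
      exacts [Or.inr h.1, Or.inl h.1]
  obtain ⟨t, htIcc, ht₁, ht₂⟩ := isPreconnected_closed_iff.mp isPreconnected_Icc T₁ T₂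
    hT₁closed hT₂closed hcover ⟨0, ⟨le_refl 0, by norm_num⟩, h0T₁⟩
    ⟨1, ⟨by norm_num, le_refl 1⟩, h1T₂⟩
  obtain ⟨x, hx, hcx⟩ := hz (z t) (hzY t htIcc)
  have h1 := ht₁.2 x hx (by linarith)
  have h2 := ht₂.2 x hx (by linarith)
  rcases hd x hx with h | h <;> linarith

section
variable {E F : Type*} [AddCommGroup E] [Module ℝ E] [TopologicalSpace E]
    [IsTopologicalAddGroup E] [ContinuousSMul ℝ E]
    [AddCommGroup F] [Module ℝ F] [TopologicalSpace F]
    [IsTopologicalAddGroup F] [ContinuousSMul ℝ F]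

lemma sion_finite
    (X : Set E) (Y : Set F) (f : E → F → ℝ)
    (hfx : ∀ x ∈ X, ContinuousOn (f x) Y)
    (hfy : ∀ y ∈ Y, ContinuousOn (fun x => f x y) X)
    (hqc : ∀ y ∈ Y, ∀ c : ℝ, Convex ℝ {x ∈ X | c ≤ f x y})
    (hqv : ∀ x ∈ X, ∀ c : ℝ, Convex ℝ {y ∈ Y | f x y ≤ c})
    (hYconv : Convex ℝ Y) :
    ∀ (l : List F), (∀ y ∈ l, y ∈ Y) →
    ∀ (X' : Set E), X' ⊆ X → X'.Nonempty → Convex ℝ X' → IsCompact X' →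
    ∀ (c : ℝ), (∀ z ∈ Y, ∃ x ∈ X', c ≤ f x z) →
    ∀ a < c, ∃ x ∈ X', ∀ y ∈ l, a ≤ f x y := by
  intro l
  induction l with
  | nil =>
    intro _ X' _ hne _ _ c _ a _
    obtain ⟨x, hx⟩ := hne
    exact ⟨x, hx, by simp⟩
  | cons y l ih =>
    intro hl X' hX'X hne hconv hcomp c hz a hac
    have hyY : y ∈ Y := hl y (List.mem_cons_self)
    set b : ℝ := (a + c) / 2 with hbdef
    have hab : a < b := by rw [hbdef]; linarith
    have hbc : b < c := by rw [hbdef]; linarith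
    set X'' : Set E := {x ∈ X' | b ≤ f x y} with hX''def
    have hX''X' : X'' ⊆ X' := fun x hx => hx.1
    have hX''X : X'' ⊆ X := fun x hx => hX'X hx.1
    have hne'' : X''.Nonempty := by
      obtain ⟨x, hx, hcx⟩ := hz y hyY
      exact ⟨x, hx, by linarith⟩
    have hsep : ∀ (y' : F), y' ∈ Y → ∀ (c' : ℝ),
        {x ∈ X' | c' ≤ f x y'} = X' ∩ {x ∈ X | c' ≤ f x y'} := by
      intro y' hy' c'
      ext x
      exact ⟨fun ⟨h1, h2⟩ => ⟨h1, hX'X h1, h2⟩, fun ⟨h1, _, h3⟩ => ⟨h1, h3⟩⟩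
    have hqc' : ∀ y' ∈ Y, ∀ c' : ℝ, Convex ℝ {x ∈ X' | c' ≤ f x y'} := by
      intro y' hy' c'
      rw [hsep y' hy' c']
      exact hconv.inter (hqc y' hy' c')
    have hconv'' : Convex ℝ X'' := hqc' y hyY b
    have hcomp'' : IsCompact X'' :=
      sion_compact_sep hcomp ((hfy y hyY).mono hX'X) isClosed_Ici
    have hz'' : ∀ z ∈ Y, ∃ x ∈ X'', b ≤ f x z := by
      intro z hzY
      obtain ⟨x, hx, h1, h2⟩ := sion_two_point X' Y f
        (fun x hx => hfx x (hX'X hx)) (fun y' hy' => (hfy y' hy').mono hX'X)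
        hqc' (fun x hx => hqv x (hX'X hx)) hYconv hzY hyY hbc hz
      exact ⟨x, ⟨hx, h2⟩, h1⟩
    obtain ⟨x, hx'', hxl⟩ := ih (fun y' hy' => hl y' (List.mem_cons_of_mem y hy'))
      X'' hX''X hne'' hconv'' hcomp'' b hz'' a hab
    refine ⟨x, hX''X' hx'', ?_⟩
    intro y' hy'
    rcases List.mem_cons.mp hy' with h | h
    · rw [h]; linarith [hx''.2]
    · exact hxl y' h

end

/-- **Sion's minimax theorem.** Let `X` and `Y` be nonempty convex compact subsets of two
real topological vector spaces, and let `f` be continuous on `X ×ˢ Y`, quasi-concave in the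
first variable and quasi-convex in the second variable. Then all the inner minima/maxima are
attained, and `max_{x∈X} min_{y∈Y} f x y = min_{y∈Y} max_{x∈X} f x y`, both outer
extrema being attained as well. -/
theorem sion_minimax
    {E F : Type*} [AddCommGroup E] [Module ℝ E] [TopologicalSpace E]
    [IsTopologicalAddGroup E] [ContinuousSMul ℝ E]
    [AddCommGroup F] [Module ℝ F] [TopologicalSpace F]
    [IsTopologicalAddGroup F] [ContinuousSMul ℝ F]
    (X : Set E) (Y : Set F)
    (hXne : X.Nonempty) (hYne : Y.Nonempty)
    (hXconv : Convex ℝ X) (hYconv : Convex ℝ Y)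
    (hXcomp : IsCompact X) (hYcomp : IsCompact Y)
    (f : E → F → ℝ)
    (hf : ContinuousOn (fun p : E × F => f p.1 p.2) (X ×ˢ Y))
    (hqc : ∀ y ∈ Y, ∀ c : ℝ, Convex ℝ {x ∈ X | c ≤ f x y})
    (hqv : ∀ x ∈ X, ∀ c : ℝ, Convex ℝ {y ∈ Y | f x y ≤ c}) :
    (∀ x ∈ X, ∃ m : ℝ, IsLeast (f x '' Y) m) ∧
    (∀ y ∈ Y, ∃ M : ℝ, IsGreatest ((fun x => f x y) '' X) M) ∧
    ∃ v : ℝ,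
      IsGreatest {m : ℝ | ∃ x ∈ X, IsLeast (f x '' Y) m} v ∧
      IsLeast {M : ℝ | ∃ y ∈ Y, IsGreatest ((fun x => f x y) '' X) M} v := by
  have hfx : ∀ x ∈ X, ContinuousOn (f x) Y := by
    intro x hx
    exact hf.comp ((Continuous.prodMk_right x).continuousOn) (fun y hy => ⟨hx, hy⟩)
  have hfy : ∀ y ∈ Y, ContinuousOn (fun x => f x y) X := by
    intro y hy
    exact hf.comp ((continuous_id.prodMk continuous_const).continuousOn)
      (fun x hx => ⟨hx, hy⟩)
  -- part 1: inner minima exist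
  have part1 : ∀ x ∈ X, ∃ m : ℝ, IsLeast (f x '' Y) m := by
    intro x hx
    obtain ⟨y₀, hy₀, hmin⟩ := hYcomp.exists_isMinOn hYne (hfx x hx)
    refine ⟨f x y₀, ⟨y₀, hy₀, rfl⟩, ?_⟩
    rintro m ⟨y, hy, rfl⟩
    exact hmin hy
  -- part 2: inner maxima exist
  have part2 : ∀ y ∈ Y, ∃ M : ℝ, IsGreatest ((fun x => f x y) '' X) M := by
    intro y hy
    obtain ⟨x₀, hx₀, hmax⟩ := hXcomp.exists_isMaxOn hXne (hfy y hy)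
    refine ⟨f x₀ y, ⟨x₀, hx₀, rfl⟩, ?_⟩
    rintro M ⟨x, hx, rfl⟩
    exact hmax hx
  refine ⟨part1, part2, ?_⟩
  set g : F → ℝ := fun y => sSup ((fun x => f x y) '' X) with hgdef
  have hgIsG : ∀ y ∈ Y, IsGreatest ((fun x => f x y) '' X) (g y) := by
    intro y hy
    obtain ⟨M, hM⟩ := part2 y hy
    rw [hgdef]
    simpa [hM.csSup_eq] using hM
  have hbdd : BddBelow (g '' Y) := by
    obtain ⟨x₀, hx₀⟩ := hXne
    obtain ⟨m₀, hm₀⟩ := part1 x₀ hx₀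
    refine ⟨m₀, ?_⟩
    rintro _ ⟨y, hy, rfl⟩
    exact le_trans (hm₀.2 ⟨y, hy, rfl⟩) ((hgIsG y hy).2 ⟨x₀, hx₀, rfl⟩)
  set v : ℝ := sInf (g '' Y) with hvdef
  have hvle : ∀ y ∈ Y, v ≤ g y := fun y hy => csInf_le hbdd ⟨y, hy, rfl⟩
  have hzv : ∀ z ∈ Y, ∃ x ∈ X, v ≤ f x z := by
    intro z hzY
    obtain ⟨x, hx, hfx'⟩ := (hgIsG z hzY).1
    exact ⟨x, hx, le_trans (hvle z hzY) (le_of_eq hfx'.symm)⟩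
  -- FIP 1 : find x* with f x* y ≥ v for all y ∈ Y
  have hXcs : CompactSpace X := isCompact_iff_compactSpace.mp hXcomp
  have hxstar : ∃ x ∈ X, ∀ y ∈ Y, v ≤ f x y := by
    by_cases hY' : Y.Nonempty
    case neg => obtain ⟨x, hx⟩ := hXne; exact ⟨x, hx, fun y hy => absurd ⟨y, hy⟩ hY'⟩
    set Z : ↥Y × ℕ → Set ↥X := fun i => {xh | v - 1 / ((i.2 : ℝ) + 1) ≤ f xh.1 i.1.1} with hZdef
    have hZclosed : ∀ i, IsClosed (Z i) := by
      intro i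
      have hcont : Continuous (fun xh : ↥X => f xh.1 i.1.1) :=
        continuousOn_iff_continuous_restrict.mp (hfy i.1.1 i.1.2)
      exact isClosed_le continuous_const hcont
    by_contra hcon
    push_neg at hcon
    have hempty : (univ : Set ↥X) ∩ ⋂ i, Z i = ∅ := by
      rw [univ_inter]
      by_contra hne
      obtain ⟨xh, hxh⟩ := nonempty_iff_ne_empty.mpr hne
      obtain ⟨y, hy, hlt⟩ := hcon xh.1 xh.2
      obtain ⟨n, hn⟩ := exists_nat_one_div_lt (by linarith : (0:ℝ) < v - f xh.1 y)
      have := mem_iInter.mp hxh (⟨y, hy⟩, n)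
      rw [hZdef] at this
      simp only [mem_setOf_eq] at this
      linarith
    obtain ⟨t, ht⟩ := isCompact_univ.elim_finite_subfamily_closed Z hZclosed hempty
    rw [univ_inter] at ht
    rcases t.eq_empty_or_nonempty with rfl | htne
    · simp at ht
      obtain ⟨x, hx⟩ := hXne
      simp [ht] at hx
    · set ε : ℝ := (t.image fun i => 1 / ((i.2 : ℝ) + 1)).min' (htne.image _) with hεdef
      have hεmem := (t.image fun i => 1 / ((i.2 : ℝ) + 1)).min'_mem (htne.image _)
      rw [← hεdef] at hεmem
      obtain ⟨i₀, hi₀t, hi₀⟩ := Finset.mem_image.mp hεmem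
      have hεpos : 0 < ε := by rw [← hi₀]; positivity
      have hεle : ∀ i ∈ t, ε ≤ 1 / ((i.2 : ℝ) + 1) := by
        intro i hi
        exact Finset.min'_le _ _ (Finset.mem_image_of_mem _ hi)
      set l : List F := t.toList.map (fun i => (i.1 : F)) with hldef
      have hlY : ∀ y ∈ l, y ∈ Y := by
        intro y hy
        rw [hldef] at hy
        obtain ⟨i, _, rfl⟩ := List.mem_map.mp hy
        exact i.1.2
      obtain ⟨x, hx, hxl⟩ := sion_finite X Y f hfx hfy hqc hqv hYconv l hlY X
        (subset_refl X) hXne hXconv hXcomp v hzv (v - ε) (by linarith)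
      have : (⟨x, hx⟩ : ↥X) ∈ ⋂ i ∈ t, Z i := by
        rw [mem_iInter₂]
        intro i hi
        rw [hZdef]
        have h1 : v - ε ≤ f x i.1.1 := hxl i.1.1 (by
          rw [hldef]
          exact List.mem_map.mpr ⟨i, Finset.mem_toList.mpr hi, rfl⟩)
        have h2 := hεle i hi
        simp only [mem_setOf_eq]
        linarith
      rw [eq_empty_iff_forall_notMem] at ht
      exact ht _ this
  obtain ⟨xs, hxs, hxsv⟩ := hxstar
  -- FIP 2 : find y₀ with g y₀ ≤ v
  have hYcs : CompactSpace Y := isCompact_iff_compactSpace.mp hYcomp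
  have hy0 : ∃ y₀ ∈ Y, g y₀ ≤ v := by
    set S : ℕ → Set ↥Y := fun n => {yh | g yh.1 ≤ v + 1 / ((n : ℝ) + 1)} with hSdef
    have hSclosed : ∀ n, IsClosed (S n) := by
      intro n
      rw [← isOpen_compl_iff]
      have : (S n)ᶜ = ⋃ x ∈ X, {yh : ↥Y | v + 1 / ((n : ℝ) + 1) < f x yh.1} := by
        ext yh
        simp only [hSdef, mem_compl_iff, mem_setOf_eq, not_le, mem_iUnion]
        constructor
        · intro h
          obtain ⟨x, hx, hfx'⟩ := (hgIsG yh.1 yh.2).1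
          exact ⟨x, hx, lt_of_lt_of_le h (le_of_eq hfx'.symm)⟩
        · rintro ⟨x, hx, h⟩
          exact lt_of_lt_of_le h ((hgIsG yh.1 yh.2).2 ⟨x, hx, rfl⟩)
      rw [this]
      apply isOpen_biUnion
      intro x hx
      exact isOpen_lt continuous_const (continuousOn_iff_continuous_restrict.mp (hfx x hx))
    have hSne : ∀ n, (S n).Nonempty := by
      intro n
      have : v < v + 1 / ((n : ℝ) + 1) := by
        have : (0:ℝ) < 1 / ((n : ℝ) + 1) := by positivity
        linarith
      obtain ⟨m, hm, hmlt⟩ := exists_lt_of_csInf_lt (hYne.image g) (hvdef ▸ this)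
      obtain ⟨y, hy, rfl⟩ := hm
      exact ⟨⟨y, hy⟩, le_of_lt hmlt⟩
    have hSanti : ∀ n, S (n + 1) ⊆ S n := by
      intro n yh hyh
      rw [hSdef] at *
      simp only [mem_setOf_eq] at *
      have h1 : 1 / ((n : ℝ) + 1 + 1) ≤ 1 / ((n : ℝ) + 1) := by
        apply one_div_le_one_div_of_le <;> linarith
      push_cast at hyh ⊢
      linarith
    obtain ⟨yh, hyh⟩ := IsCompact.nonempty_iInter_of_sequence_nonempty_isCompact_isClosed S
      hSanti hSne ((hSclosed 0).isCompact) hSclosed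
    refine ⟨yh.1, yh.2, ?_⟩
    by_contra hlt
    push_neg at hlt
    obtain ⟨n, hn⟩ := exists_nat_one_div_lt (by linarith : (0:ℝ) < g yh.1 - v)
    have := mem_iInter.mp hyh n
    rw [hSdef] at this
    simp only [mem_setOf_eq] at this
    linarith
  obtain ⟨y₀, hy₀Y, hgy₀⟩ := hy0
  -- conclusions
  have hub : ∀ m ∈ {m : ℝ | ∃ x ∈ X, IsLeast (f x '' Y) m}, m ≤ v := by
    rintro m ⟨x, hx, hm⟩
    apply le_csInf (hYne.image g)
    rintro _ ⟨y, hy, rfl⟩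
    exact le_trans (hm.2 ⟨y, hy, rfl⟩) ((hgIsG y hy).2 ⟨x, hx, rfl⟩)
  obtain ⟨ms, hms⟩ := part1 xs hxs
  have hmsv : ms = v := by
    have h1 : ms ≤ v := hub ms ⟨xs, hxs, hms⟩
    have h2 : v ≤ ms := by
      obtain ⟨y, hy, rfl⟩ := hms.1
      exact hxsv y hy
    linarith
  refine ⟨v, ⟨?_, hub⟩, ?_, ?_⟩
  · exact ⟨xs, hxs, hmsv ▸ hms⟩
  · refine ⟨y₀, hy₀Y, ?_⟩
    have : g y₀ = v := le_antisymm hgy₀ (hvle y₀ hy₀Y)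
    exact this ▸ hgIsG y₀ hy₀Y
  · rintro M ⟨y, hy, hM⟩
    rw [← hM.csSup_eq]
    exact hvle y hy
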